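/- Fix naturals a, b, let F be the Fibonacci sequence (F 0 = 0, F 1 = 1), and define h : ℤ → ℤ with h n = 0 for n < 0, h 0 = 1, h 1 = a, h 2 = a^2 + b, h 3 = a^3 + 3ab, and h n = a*h(n-1) + b*h(n-2) + a*b*h(n-3) + b^2*h(n-4) for n ≥ 4. Then for all n ≥ 1: h(2n-1) = a * ∑_{k=0}^{n} b^k * h(2n-2k-2) * F(k+2). -/

import Mathlib

private theorem shift_aux (b:ℕ) (h:ℤ→ℤ) (c:ℤ) (N:ℕ) (G:ℕ→ℤ) :
  ∑ k ∈ Finset.range (N+1), (b:ℤ)^k * h (c - 2*k) * G k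
    = h c * G 0 + b * ∑ k ∈ Finset.range N, ((b:ℤ)^k * h ((c-2) - 2*k) * G (k+1)) := by
  rw [Finset.sum_range_succ', Finset.mul_sum, add_comm]
  congr 1
  · push_cast; ring_nf
  · apply Finset.sum_congr rfl
    intro k _
    have e : c - 2*((k:ℤ)+1) = c - 2 - 2*k := by ring
    push_cast
    rw [e, pow_succ]
    ring

theorem stmt_9 (a b : ℕ) (h : ℤ → ℤ)
    (hneg : ∀ n : ℤ, n < 0 → h n = 0)
    (h0 : h 0 = 1) (h1 : h 1 = a) (h2 : h 2 = (a : ℤ) ^ 2 + b)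
    (h3 : h 3 = (a : ℤ) ^ 3 + 3 * a * b)
    (hrec : ∀ n : ℤ, 4 ≤ n →
      h n = a * h (n - 1) + b * h (n - 2) + a * b * h (n - 3) + b ^ 2 * h (n - 4)) :
    ∀ n : ℕ, 1 ≤ n →
      h (2 * (n : ℤ) - 1) =
        a * ∑ k ∈ Finset.range (n + 1),
          (b : ℤ) ^ k * h (2 * (n : ℤ) - 2 * k - 2) * Nat.fib (k + 2) := by
  intro n
  induction n using Nat.strong_induction_on with
  | _ n ih =>
  intro hn
  have hm2 : h (-2) = 0 := hneg _ (by norm_num)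
  match n, hn with
  | 1, _ =>
    norm_num [Finset.sum_range_succ, hm2, h0, h1]
  | 2, _ =>
    norm_num [Finset.sum_range_succ, hm2, h0, h2, h3]
    ring
  | (m+3), _ =>
    have IH1 := ih (m+2) (by omega) (by omega)
    have IH2 := ih (m+1) (by omega) (by omega)
    have hr := hrec (2*((m:ℤ)+3) - 1) (by omega)
    push_cast at IH1 IH2 ⊢
    have split : ∀ k:ℕ, ((Nat.fib (k+2):ℤ)) = Nat.fib (k+1) + Nat.fib k := by
      intro k; rw [Nat.fib_add_two]; push_cast; ring
    set C : ℤ := 2*(m:ℤ)+4 with hC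
    have key : (∑ k ∈ Finset.range (m+3+1),
          (b : ℤ) ^ k * h (2 * ((m:ℤ)+3) - 2 * k - 2) * Nat.fib (k + 2))
        = h C + b * (∑ k ∈ Finset.range (m+2+1),
            (b : ℤ) ^ k * h (2 * ((m:ℤ)+2) - 2 * k - 2) * Nat.fib (k + 2))
          + b * (h (C-2) + b * (∑ k ∈ Finset.range (m+1+1),
            (b : ℤ) ^ k * h (2 * ((m:ℤ)+1) - 2 * k - 2) * Nat.fib (k + 2))) := by
      calc
        (∑ k ∈ Finset.range (m+3+1),
            (b : ℤ) ^ k * h (2 * ((m:ℤ)+3) - 2 * k - 2) * Nat.fib (k + 2))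
          = ∑ k ∈ Finset.range (m+3+1),
            ((b : ℤ) ^ k * h (C - 2 * k) * Nat.fib (k+1)
              + (b : ℤ) ^ k * h (C - 2 * k) * Nat.fib k) := by
            apply Finset.sum_congr rfl
            intro k _
            rw [split k, show 2 * ((m:ℤ)+3) - 2 * k - 2 = C - 2*k from by rw [hC]; ring]
            ring
        _ = (∑ k ∈ Finset.range (m+3+1), (b : ℤ) ^ k * h (C - 2 * k) * Nat.fib (k+1))
            + (∑ k ∈ Finset.range (m+3+1), (b : ℤ) ^ k * h (C - 2 * k) * Nat.fib k) :=
          Finset.sum_add_distrib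
        _ = (h C * Nat.fib 1 + b * ∑ k ∈ Finset.range (m+3),
              (b : ℤ) ^ k * h ((C-2) - 2 * k) * Nat.fib (k+2))
            + (h C * Nat.fib 0 + b * ∑ k ∈ Finset.range (m+3),
              (b : ℤ) ^ k * h ((C-2) - 2 * k) * Nat.fib (k+1)) := by
          rw [shift_aux b h C (m+3) (fun k => (Nat.fib (k+1) : ℤ)),
              shift_aux b h C (m+3) (fun k => (Nat.fib k : ℤ))]
        _ = (h C * Nat.fib 1 + b * ∑ k ∈ Finset.range (m+3),
              (b : ℤ) ^ k * h ((C-2) - 2 * k) * Nat.fib (k+2))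
            + (h C * Nat.fib 0 + b * (h (C-2) * Nat.fib 1 + b * ∑ k ∈ Finset.range (m+2),
              (b : ℤ) ^ k * h ((C-2-2) - 2 * k) * Nat.fib (k+2))) := by
          rw [shift_aux b h (C-2) (m+2) (fun k => (Nat.fib (k+1) : ℤ))]
        _ = _ := by
          have c1 : (∑ k ∈ Finset.range (m+3),
                (b : ℤ) ^ k * h (C - 2 - 2 * k) * Nat.fib (k+2))
              = ∑ k ∈ Finset.range (m+2+1),
                (b : ℤ) ^ k * h (2 * ((m:ℤ)+2) - 2 * k - 2) * Nat.fib (k + 2) := by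
            apply Finset.sum_congr rfl
            intro k _
            rw [show C - 2 - 2*(k:ℤ) = 2 * ((m:ℤ)+2) - 2 * k - 2 from by rw [hC]; ring]
          have c2 : (∑ k ∈ Finset.range (m+2),
                (b : ℤ) ^ k * h (C - 2 - 2 - 2 * k) * Nat.fib (k+2))
              = ∑ k ∈ Finset.range (m+1+1),
                (b : ℤ) ^ k * h (2 * ((m:ℤ)+1) - 2 * k - 2) * Nat.fib (k + 2) := by
            apply Finset.sum_congr rfl
            intro k _
            rw [show C - 2 - 2 - 2*(k:ℤ) = 2 * ((m:ℤ)+1) - 2 * k - 2 from by rw [hC]; ring]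
          rw [c1, c2]
          simp [Nat.fib_one, Nat.fib_zero]
    rw [key, hC]
    ring_nf at hr IH1 IH2 ⊢
    linear_combination hr + (b:ℤ) * IH1 + (b:ℤ)^2 * IH2
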